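/- Let q ∈ k be nonzero and η ∈ {0,1}. The 4×4 matrix R (acting on k²⊗k² with basis e₁⊗e₁, e₁⊗e₂, e₂⊗e₁, e₂⊗e₂) with rows (1,0,0,0), (0,1,0,0), (0,1−q,q,0), (η,0,0,−q) is an invertible solution of the quantum Yang-Baxter equation R¹² ∘ R¹³ ∘ R²³ = R²³ ∘ R¹³ ∘ R¹². -/

import Mathlib

open TensorProduct

set_option synthInstance.maxHeartbeats 1000000
set_option maxHeartbeats 4000000

noncomputable section

def tw (k V : Type*) [Field k] [AddCommGroup V] [Module k V] :
    V ⊗[k] V →ₗ[k] V ⊗[k] V := (TensorProduct.comm k V V).toLinearMap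

def R12 {k V : Type*} [Field k] [AddCommGroup V] [Module k V]
    (R : V ⊗[k] V →ₗ[k] V ⊗[k] V) :
    V ⊗[k] (V ⊗[k] V) →ₗ[k] V ⊗[k] (V ⊗[k] V) :=
  (TensorProduct.assoc k V V V).toLinearMap ∘ₗ TensorProduct.map R LinearMap.id ∘ₗ
    (TensorProduct.assoc k V V V).symm.toLinearMap

def R23 {k V : Type*} [Field k] [AddCommGroup V] [Module k V]
    (R : V ⊗[k] V →ₗ[k] V ⊗[k] V) :
    V ⊗[k] (V ⊗[k] V) →ₗ[k] V ⊗[k] (V ⊗[k] V) :=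
  TensorProduct.map LinearMap.id R

def R13 {k V : Type*} [Field k] [AddCommGroup V] [Module k V]
    (R : V ⊗[k] V →ₗ[k] V ⊗[k] V) :
    V ⊗[k] (V ⊗[k] V) →ₗ[k] V ⊗[k] (V ⊗[k] V) :=
  TensorProduct.map LinearMap.id (tw k V) ∘ₗ R12 R ∘ₗ TensorProduct.map LinearMap.id (tw k V)

theorem qybe_matrix_solution {k : Type*} [Field k] (q η : k) (hq : q ≠ 0)
    (hη : η = 0 ∨ η = 1)
    (R : (Fin 2 → k) ⊗[k] (Fin 2 → k) →ₗ[k] (Fin 2 → k) ⊗[k] (Fin 2 → k))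
    (h11 : R (Pi.basisFun k (Fin 2) 0 ⊗ₜ Pi.basisFun k (Fin 2) 0) =
      Pi.basisFun k (Fin 2) 0 ⊗ₜ Pi.basisFun k (Fin 2) 0 +
        η • Pi.basisFun k (Fin 2) 1 ⊗ₜ Pi.basisFun k (Fin 2) 1)
    (h12 : R (Pi.basisFun k (Fin 2) 0 ⊗ₜ Pi.basisFun k (Fin 2) 1) =
      Pi.basisFun k (Fin 2) 0 ⊗ₜ Pi.basisFun k (Fin 2) 1 +
        (1 - q) • Pi.basisFun k (Fin 2) 1 ⊗ₜ Pi.basisFun k (Fin 2) 0)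
    (h21 : R (Pi.basisFun k (Fin 2) 1 ⊗ₜ Pi.basisFun k (Fin 2) 0) =
      q • Pi.basisFun k (Fin 2) 1 ⊗ₜ Pi.basisFun k (Fin 2) 0)
    (h22 : R (Pi.basisFun k (Fin 2) 1 ⊗ₜ Pi.basisFun k (Fin 2) 1) =
      -q • Pi.basisFun k (Fin 2) 1 ⊗ₜ Pi.basisFun k (Fin 2) 1) :
    Function.Bijective R ∧
      R12 R ∘ₗ R13 R ∘ₗ R23 R = R23 R ∘ₗ R13 R ∘ₗ R12 R := by
  classical
  set b := Pi.basisFun k (Fin 2) with hb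
  constructor
  · set S : (Fin 2 → k) ⊗[k] (Fin 2 → k) →ₗ[k] (Fin 2 → k) ⊗[k] (Fin 2 → k) :=
      (b.tensorProduct b).constr k
        (fun p : Fin 2 × Fin 2 =>
          if p = (0,0) then b 0 ⊗ₜ[k] b 0 + (η * q⁻¹) • b 1 ⊗ₜ[k] b 1
          else if p = (0,1) then b 0 ⊗ₜ[k] b 1 + (-(1-q) * q⁻¹) • b 1 ⊗ₜ[k] b 0
          else if p = (1,0) then q⁻¹ • b 1 ⊗ₜ[k] b 0
          else (-q⁻¹) • b 1 ⊗ₜ[k] b 1) with hS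
    have hS00 : S (b 0 ⊗ₜ[k] b 0) = b 0 ⊗ₜ[k] b 0 + (η * q⁻¹) • b 1 ⊗ₜ[k] b 1 := by
      rw [show (b 0 ⊗ₜ[k] b 0) = (b.tensorProduct b) (0,0) from
        (Module.Basis.tensorProduct_apply b b 0 0).symm, hS, Module.Basis.constr_basis, if_pos rfl, Module.Basis.tensorProduct_apply]
    have hS01 : S (b 0 ⊗ₜ[k] b 1) = b 0 ⊗ₜ[k] b 1 + (-(1-q) * q⁻¹) • b 1 ⊗ₜ[k] b 0 := by
      rw [show (b 0 ⊗ₜ[k] b 1) = (b.tensorProduct b) (0,1) from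
        (Module.Basis.tensorProduct_apply b b 0 1).symm, hS, Module.Basis.constr_basis,
        if_neg (by decide), if_pos rfl, Module.Basis.tensorProduct_apply]
    have hS10 : S (b 1 ⊗ₜ[k] b 0) = q⁻¹ • b 1 ⊗ₜ[k] b 0 := by
      rw [show (b 1 ⊗ₜ[k] b 0) = (b.tensorProduct b) (1,0) from
        (Module.Basis.tensorProduct_apply b b 1 0).symm, hS, Module.Basis.constr_basis,
        if_neg (by decide), if_neg (by decide), if_pos rfl, Module.Basis.tensorProduct_apply]
    have hS11 : S (b 1 ⊗ₜ[k] b 1) = (-q⁻¹) • b 1 ⊗ₜ[k] b 1 := by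
      rw [show (b 1 ⊗ₜ[k] b 1) = (b.tensorProduct b) (1,1) from
        (Module.Basis.tensorProduct_apply b b 1 1).symm, hS, Module.Basis.constr_basis,
        if_neg (by decide), if_neg (by decide), if_neg (by decide), Module.Basis.tensorProduct_apply]
    have hRS : R ∘ₗ S = LinearMap.id := by
      refine Module.Basis.ext (b := b.tensorProduct b) ?_
      rintro ⟨i, j⟩
      fin_cases i <;> fin_cases j <;>
        · simp only [LinearMap.comp_apply, LinearMap.id_apply, Module.Basis.tensorProduct_apply,
            Fin.zero_eta, Fin.mk_one, Fin.isValue, hS00, hS01, hS10, hS11,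
            map_add, map_smul, h11, h12, h21, h22, smul_add, smul_smul]
          match_scalars <;> field_simp <;> ring
    have hSR : S ∘ₗ R = LinearMap.id := by
      refine Module.Basis.ext (b := b.tensorProduct b) ?_
      rintro ⟨i, j⟩
      fin_cases i <;> fin_cases j <;>
        · simp only [LinearMap.comp_apply, LinearMap.id_apply, Module.Basis.tensorProduct_apply,
            Fin.zero_eta, Fin.mk_one, Fin.isValue, h11, h12, h21, h22,
            map_add, map_smul, hS00, hS01, hS10, hS11, smul_add, smul_smul]
          match_scalars <;> field_simp <;> ring
    have hl : Function.LeftInverse S R := fun x => by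
      rw [← LinearMap.comp_apply, hSR, LinearMap.id_apply]
    have hr : Function.RightInverse S R := fun x => by
      rw [← LinearMap.comp_apply, hRS, LinearMap.id_apply]
    exact ⟨hl.injective, hr.surjective⟩
  · refine Module.Basis.ext (b := b.tensorProduct (b.tensorProduct b)) ?_
    rintro ⟨i, j, l⟩
    rcases hη with rfl | rfl <;>
      fin_cases i <;> fin_cases j <;> fin_cases l <;>
      simp only [Module.Basis.tensorProduct_apply, Fin.zero_eta, Fin.mk_one, Fin.isValue,
        R12, R13, R23, tw, LinearMap.coe_comp, Function.comp_apply, LinearMap.comp_apply,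
        LinearEquiv.coe_coe, TensorProduct.map_tmul, LinearMap.id_coe, id_eq,
        LinearMap.id_apply, TensorProduct.comm_tmul, TensorProduct.assoc_tmul,
        TensorProduct.assoc_symm_tmul, map_add, map_smul, map_neg, map_sub, h11, h12, h21, h22,
        add_tmul, tmul_add, smul_tmul, tmul_smul, smul_add, smul_smul,
        zero_smul, one_smul, add_zero, zero_add, smul_zero, tmul_neg, neg_tmul] <;>
      match_scalars <;> ring
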